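/- (Theorem 4.5, optimality of the maximum entropy model among frequency-based models.) Fix a collection of itemsets C = {X_1,…,X_k}, a dataset D, and let p*_C be a maximum-entropy distribution on T with p*_C(X_i = 1) = fr(X_i|D) for all i. Let r be a distribution on T with r(t) > 0 for all t ∈ T, and suppose that for any two nonempty finite datasets D_1, D_2 satisfying fr(X|D_1) = fr(X|D_2) for every X ∈ C, one has (1/|D_1|)·log₂ r(D_1) = (1/|D_2|)·log₂ r(D_2). Then p*_C(D) ≥ r(D). -/

import Mathlib

open scoped BigOperators

/-- A transaction over `N` items: an element of `{0,1}^N`. -/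
abbrev Transaction (N : ℕ) := Fin N → Bool

/-- A transaction `t` supports an itemset `X` iff `t i = 1` for all `i ∈ X`. -/
def supports {N : ℕ} (X : Finset (Fin N)) (t : Transaction N) : Prop :=
  ∀ i ∈ X, t i = true

instance {N : ℕ} (X : Finset (Fin N)) (t : Transaction N) : Decidable (supports X t) :=
  inferInstanceAs (Decidable (∀ i ∈ X, t i = true))

/-- A distribution on `{0,1}^N`: values in `[0,1]` summing to one. -/
def IsDistr {N : ℕ} (p : Transaction N → ℝ) : Prop :=
  (∀ t, 0 ≤ p t ∧ p t ≤ 1) ∧ ∑ t, p t = 1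

/-- `p(X = 1)`: the probability that a transaction supports `X`. -/
def probOne {N : ℕ} (p : Transaction N → ℝ) (X : Finset (Fin N)) : ℝ :=
  ∑ t, if supports X t then p t else 0

/-- Binary entropy `H(p) = -∑ p(t) log₂ p(t)` (with `0·log₂ 0 = 0`, as `Real.logb 2 0 = 0`). -/
noncomputable def entropy {N : ℕ} (p : Transaction N → ℝ) : ℝ :=
  - ∑ t, p t * Real.logb 2 (p t)

/-- Frequency of an itemset in a dataset (a multiset of transactions). -/
noncomputable def freq {N : ℕ} (X : Finset (Fin N)) (D : Multiset (Transaction N)) : ℝ :=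
  (D.countP (fun t => supports X t) : ℝ) / (Multiset.card D : ℝ)

/-- Likelihood of a dataset: `p(D) = ∏_{t ∈ D} p(t)`. -/
noncomputable def lhd {N : ℕ} (p : Transaction N → ℝ) (D : Multiset (Transaction N)) : ℝ :=
  (D.map p).prod


/-! ### Auxiliary lemmas -/

section Aux

open Finset

set_option linter.unusedSectionVars false

variable {α : Type*} [Fintype α] [DecidableEq α]

lemma my_countP_eq_sum (D : Multiset α) (pred : α → Prop) [DecidablePred pred] :
    D.countP pred = ∑ t, if pred t then D.count t else 0 := by
  induction D using Multiset.induction with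
  | empty => simp
  | cons a D ih =>
      rw [Multiset.countP_cons, ih]
      have h1 : ∀ t, (if pred t then Multiset.count t (a ::ₘ D) else 0)
          = (if pred t then Multiset.count t D else 0)
            + (if pred t then (if t = a then 1 else 0) else 0) := by
        intro t
        by_cases h : pred t <;> simp [h, Multiset.count_cons]
      simp only [h1, Finset.sum_add_distrib]
      congr 1
      have h2 : ∀ x : α, (if pred x then if x = a then 1 else 0 else 0)
          = if x = a then (if pred x then 1 else 0) else 0 := by
        intro x; by_cases h : pred x <;> by_cases h2 : x = a <;> simp [h, h2]
      rw [Finset.sum_congr rfl (fun t _ => h2 t), Finset.sum_ite_eq' Finset.univ a]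
      simp

lemma my_card_eq_sum (D : Multiset α) : Multiset.card D = ∑ t, D.count t := by
  induction D using Multiset.induction with
  | empty => simp
  | cons a D ih =>
      simp only [Multiset.card_cons, ih, Multiset.count_cons, Finset.sum_add_distrib]
      simp

lemma my_lhd_eq_prod (f : α → ℝ) (D : Multiset α) :
    (D.map f).prod = ∏ t, f t ^ D.count t := by
  induction D using Multiset.induction with
  | empty => simp
  | cons a D ih =>
      rw [Multiset.map_cons, Multiset.prod_cons, ih]
      have h1 : ∀ t, f t ^ Multiset.count t (a ::ₘ D)
          = f t ^ Multiset.count t D * (if t = a then f t else 1) := by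
        intro t
        by_cases h : t = a <;> simp [h, Multiset.count_cons, pow_succ]
      rw [Finset.prod_congr rfl (fun t _ => h1 t), Finset.prod_mul_distrib,
        Finset.prod_ite_eq' Finset.univ a]
      simp [mul_comm]

lemma my_log_lhd {f : α → ℝ} {D : Multiset α} (h : ∀ t, D.count t ≠ 0 → 0 < f t) :
    Real.log ((D.map f).prod) = ∑ t, (D.count t : ℝ) * Real.log (f t) := by
  rw [my_lhd_eq_prod]
  rw [Real.log_prod]
  · refine Finset.sum_congr rfl fun t _ => ?_
    by_cases hc : D.count t = 0
    · simp [hc]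
    · rw [Real.log_pow]
  · intro t _
    by_cases hc : D.count t = 0
    · simp [hc]
    · exact pow_ne_zero _ (ne_of_gt (h t hc))

lemma my_gibbs {p r : α → ℝ} (hp : ∀ t, 0 ≤ p t) (hps : ∑ t, p t = 1)
    (hr : ∀ t, 0 < r t) (hrs : ∑ t, r t ≤ 1) :
    ∑ t, p t * Real.log (r t) ≤ ∑ t, p t * Real.log (p t) := by
  have key : ∀ t : α, p t * Real.log (r t) - p t * Real.log (p t) ≤ r t - p t := by
    intro t
    rcases eq_or_lt_of_le (hp t) with h0 | h0
    · simp [← h0]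
      exact (hr t).le
    · have hdiv : 0 < r t / p t := div_pos (hr t) h0
      have h3 := Real.log_le_sub_one_of_pos hdiv
      rw [Real.log_div (ne_of_gt (hr t)) (ne_of_gt h0)] at h3
      have h2 := mul_le_mul_of_nonneg_left h3 (hp t)
      calc p t * Real.log (r t) - p t * Real.log (p t)
          = p t * (Real.log (r t) - Real.log (p t)) := by ring
        _ ≤ p t * (r t / p t - 1) := h2
        _ = r t - p t := by field_simp
  have hsum := Finset.sum_le_sum (fun t (_ : t ∈ univ) => key t)
  rw [Finset.sum_sub_distrib] at hsum
  have h4 : ∑ t, (r t - p t) ≤ 0 := by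
    rw [Finset.sum_sub_distrib, hps]
    linarith
  linarith [le_trans hsum h4]

/-- The (negated, natural-log) entropy sum. -/
noncomputable def Lsum (p : α → ℝ) : ℝ := ∑ t, p t * Real.log (p t)

lemma my_support_subset {p q : α → ℝ} (hp : ∀ t, 0 ≤ p t) (hq : ∀ t, 0 ≤ q t)
    (hLq : Lsum p ≤ Lsum q)
    (hmix : ∀ ε : ℝ, 0 < ε → ε < 1 → Lsum p ≤ Lsum (fun t => (1 - ε) * p t + ε * q t)) :
    ∀ t, 0 < q t → 0 < p t := by
  intro t0 hq0
  by_contra hp0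
  have hp0 : p t0 = 0 := le_antisymm (not_lt.mp hp0) (hp t0)
  set ε : ℝ := Real.exp (-((Lsum q - Lsum p) / q t0 + 1)) with hε
  have hεpos : 0 < ε := Real.exp_pos _
  have hexp : 0 < (Lsum q - Lsum p) / q t0 + 1 := by
    have : 0 ≤ (Lsum q - Lsum p) / q t0 := div_nonneg (by linarith) hq0.le
    linarith
  have hεlt : ε < 1 := by
    rw [hε, Real.exp_lt_one_iff]
    linarith
  have hlnε : Real.log ε = -((Lsum q - Lsum p) / q t0 + 1) := Real.log_exp _
  set m : α → ℝ := fun t => (1 - ε) * p t + ε * q t with hm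
  have hchord : ∀ t : α, m t * Real.log (m t)
      ≤ (1 - ε) * (p t * Real.log (p t)) + ε * (q t * Real.log (q t)) := by
    intro t
    have := Real.convexOn_mul_log.2 (Set.mem_Ici.mpr (hp t)) (Set.mem_Ici.mpr (hq t))
      (by linarith : (0:ℝ) ≤ 1 - ε) hεpos.le (by ring)
    simpa [smul_eq_mul, mul_assoc] using this
  have hkey : Lsum m ≤ (1 - ε) * Lsum p + ε * Lsum q + ε * q t0 * Real.log ε := by
    have hbound : ∀ t ∈ univ, m t * Real.log (m t)
        ≤ ((1 - ε) * (p t * Real.log (p t)) + ε * (q t * Real.log (q t)))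
          + (if t = t0 then ε * q t0 * Real.log ε else 0) := by
      intro t _
      by_cases ht : t = t0
      · subst ht
        have hmt : m t = ε * q t := by rw [hm]; simp [hp0]
        rw [hmt, if_pos rfl]
        rw [Real.log_mul (ne_of_gt hεpos) (ne_of_gt hq0)]
        simp [hp0]
        ring_nf
        nlinarith [hq0, hεpos]
      · rw [if_neg ht]
        simpa using hchord t
    calc Lsum m ≤ ∑ t, (((1 - ε) * (p t * Real.log (p t)) + ε * (q t * Real.log (q t)))
          + (if t = t0 then ε * q t0 * Real.log ε else 0)) := Finset.sum_le_sum hbound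
      _ = (1 - ε) * Lsum p + ε * Lsum q + ε * q t0 * Real.log ε := by
          rw [Finset.sum_add_distrib, Finset.sum_add_distrib, Finset.sum_ite_eq' univ t0]
          simp [Lsum, Finset.mul_sum]
  have hmge := hmix ε hεpos hεlt
  rw [← hm] at hmge
  have h1 : q t0 * (-Real.log ε) ≤ Lsum q - Lsum p := by
    have h5 : Lsum p ≤ (1 - ε) * Lsum p + ε * Lsum q + ε * q t0 * Real.log ε :=
      le_trans hmge hkey
    have h2 : 0 ≤ ε * (Lsum q - Lsum p + q t0 * Real.log ε) := by nlinarith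
    nlinarith
  rw [hlnε] at h1
  have h6 : q t0 * ((Lsum q - Lsum p) / q t0 + 1) = (Lsum q - Lsum p) + q t0 := by
    field_simp
  rw [neg_neg, h6] at h1
  linarith

lemma my_cross_le {p q : α → ℝ} (hp : ∀ t, 0 ≤ p t) (hq : ∀ t, 0 ≤ q t)
    (hps : ∑ t, p t = 1) (hqs : ∑ t, q t = 1)
    (hsupp : ∀ t, 0 < q t → 0 < p t)
    (hmix : ∀ ε : ℝ, 0 < ε → ε < 1 → Lsum p ≤ Lsum (fun t => (1 - ε) * p t + ε * q t)) :
    Lsum p ≤ ∑ t, q t * Real.log (p t) := by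
  classical
  set S : Finset α := univ.filter (fun t => 0 < p t) with hS
  have hpoff : ∀ t, t ∉ S → p t = 0 := by
    intro t ht
    simp only [hS, mem_filter, mem_univ, true_and, not_lt] at ht
    exact le_antisymm ht (hp t)
  have hqoff : ∀ t, t ∉ S → q t = 0 := by
    intro t ht
    by_contra h
    have h1 : 0 < q t := lt_of_le_of_ne (hq t) (Ne.symm h)
    have h2 := hsupp t h1
    simp only [hS, mem_filter, mem_univ, true_and] at ht
    exact ht h2
  have hSsub : S ⊆ univ := subset_univ S
  have hSq : ∑ t ∈ S, q t = 1 := by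
    rw [← hqs]
    exact Finset.sum_subset hSsub (fun t _ ht => hqoff t ht)
  have hSp : ∑ t ∈ S, p t = 1 := by
    rw [← hps]
    exact Finset.sum_subset hSsub (fun t _ ht => hpoff t ht)
  have hLpS : ∑ t ∈ S, p t * Real.log (p t) = Lsum p := by
    unfold Lsum
    exact Finset.sum_subset hSsub (fun t _ ht => by simp [hpoff t ht])
  have hcrossS : ∑ t ∈ S, q t * Real.log (p t) = ∑ t, q t * Real.log (p t) :=
    Finset.sum_subset hSsub (fun t _ ht => by simp [hqoff t ht])
  set A : ℝ := ∑ t ∈ S, (q t - p t) * Real.log (p t) with hA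
  set B : ℝ := ∑ t ∈ S, (q t - p t) ^ 2 / p t with hB
  have hBnn : 0 ≤ B := Finset.sum_nonneg fun t ht => by
    have : 0 < p t := (mem_filter.mp ht).2
    positivity
  have key : ∀ ε : ℝ, 0 < ε → ε < 1 → 0 ≤ ε * A + ε ^ 2 * B := by
    intro ε hε0 hε1
    set m : α → ℝ := fun t => (1 - ε) * p t + ε * q t with hm
    have hterm : ∀ t ∈ S, m t * Real.log (m t)
        ≤ p t * Real.log (p t) + (m t - p t) + (m t - p t) * Real.log (p t)
          + (m t - p t) ^ 2 / p t := by
      intro t ht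
      have hpt : 0 < p t := (mem_filter.mp ht).2
      have hmt : 0 < m t := by
        have h7 : 0 ≤ ε * q t := mul_nonneg hε0.le (hq t)
        have h8 : 0 < (1 - ε) * p t := mul_pos (by linarith) hpt
        simp only [hm]
        linarith
      have hu := Real.log_le_sub_one_of_pos (div_pos hmt hpt)
      rw [Real.log_div (ne_of_gt hmt) (ne_of_gt hpt)] at hu
      have h1 : m t * (Real.log (m t) - Real.log (p t)) ≤ m t * (m t / p t - 1) :=
        mul_le_mul_of_nonneg_left hu hmt.le
      have h2 : m t * (m t / p t - 1) = p t * 0 + (m t - p t) + (m t - p t) ^ 2 / p t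
          - (m t - p t) * 0 := by
        field_simp
        ring
      nlinarith [h1, h2]
    have hmoff : ∀ t, t ∉ S → m t = 0 := by
      intro t ht
      simp [hm, hpoff t ht, hqoff t ht]
    have hLm : Lsum m = ∑ t ∈ S, m t * Real.log (m t) := by
      unfold Lsum
      exact (Finset.sum_subset hSsub (fun t _ ht => by simp [hmoff t ht])).symm
    have hsum := Finset.sum_le_sum hterm
    rw [← hLm] at hsum
    have hsplit : ∑ t ∈ S, (p t * Real.log (p t) + (m t - p t) + (m t - p t) * Real.log (p t)
        + (m t - p t) ^ 2 / p t) = Lsum p + 0 + ε * A + ε ^ 2 * B := by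
      rw [Finset.sum_add_distrib, Finset.sum_add_distrib, Finset.sum_add_distrib, hLpS]
      congr 1
      · congr 1
        · congr 1
          have h9 : ∀ t ∈ S, m t - p t = ε * (q t - p t) := by
            intro t _; simp only [hm]; ring
          rw [Finset.sum_congr rfl h9, ← Finset.mul_sum, Finset.sum_sub_distrib, hSq, hSp]
          ring
        · have h9 : ∀ t ∈ S, (m t - p t) * Real.log (p t)
              = ε * ((q t - p t) * Real.log (p t)) := by
            intro t _; simp only [hm]; ring
          rw [Finset.sum_congr rfl h9, ← Finset.mul_sum, hA]
      · have h9 : ∀ t ∈ S, (m t - p t) ^ 2 / p t = ε ^ 2 * ((q t - p t) ^ 2 / p t) := by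
          intro t _
          simp only [hm]
          rw [← mul_div_assoc]
          congr 1
          ring
        rw [Finset.sum_congr rfl h9, ← Finset.mul_sum, hB]
    rw [hsplit] at hsum
    have h10 := hmix ε hε0 hε1
    rw [← hm] at h10
    linarith
  have hAnn : 0 ≤ A := by
    by_contra hAneg
    push_neg at hAneg
    set ε : ℝ := min (1/2) (-A / (2 * (B + 1))) with hε
    have hε0 : 0 < ε := by
      apply lt_min (by norm_num)
      apply div_pos (by linarith)
      linarith
    have hε1 : ε < 1 := lt_of_le_of_lt (min_le_left _ _) (by norm_num)
    have hk := key ε hε0 hε1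
    have hεle : ε ≤ -A / (2 * (B + 1)) := min_le_right _ _
    have hεB : ε * B ≤ -A / 2 := by
      have h1 : ε * B ≤ (-A / (2 * (B + 1))) * B := mul_le_mul_of_nonneg_right hεle hBnn
      have h2 : (-A / (2 * (B + 1))) * B ≤ -A / 2 := by
        rw [div_mul_eq_mul_div, div_le_div_iff₀ (by linarith) (by norm_num)]
        nlinarith
      linarith
    have h11 : 0 ≤ A + ε * B := by
      have h3 : 0 ≤ ε * (A + ε * B) := by nlinarith
      nlinarith
    linarith
  have h12 : ∑ t ∈ S, q t * Real.log (p t) = A + Lsum p := by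
    rw [hA, ← hLpS, ← Finset.sum_add_distrib]
    apply Finset.sum_congr rfl
    intro t _
    ring
  rw [← hcrossS, h12]
  linarith

end Aux

section AffineAux

open Finset

lemma my_exists_affine {N : ℕ} (C : Finset (Finset (Fin N))) (F : Transaction N → ℝ)
    (hker : ∀ w : Transaction N → ℤ,
      (∀ X ∈ insert ∅ C, ∑ t, (if supports X t then w t else 0) = 0) →
      ∑ t, (w t : ℝ) * F t = 0) :
    ∃ lam : Finset (Fin N) → ℝ,
      ∀ t, F t = ∑ X ∈ insert ∅ C, (if supports X t then lam X else 0) := by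
  classical
  have hkerQ : ∀ w : Transaction N → ℚ,
      (∀ X ∈ insert ∅ C, ∑ t, (if supports X t then w t else 0) = 0) →
      ∑ t, ((w t : ℝ)) * F t = 0 := by
    intro w hw
    set d : ℕ := ∏ t, (w t).den with hd
    have hdpos : 0 < d := Finset.prod_pos fun t _ => (w t).pos
    have hdvd : ∀ t, (w t).den ∣ d := fun t => Finset.dvd_prod_of_mem _ (mem_univ t)
    have hz : ∀ t, ∃ z : ℤ, (z : ℚ) = w t * d := by
      intro t
      obtain ⟨k, hk⟩ := hdvd t
      refine ⟨(w t).num * k, ?_⟩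
      rw [hk]
      push_cast
      rw [← mul_assoc, Rat.mul_den_eq_num]
    choose z hzval using hz
    have hwz : ∀ X ∈ insert ∅ C, ∑ t, (if supports X t then z t else 0) = 0 := by
      intro X hX
      have h13 : ((∑ t, (if supports X t then z t else 0) : ℤ) : ℚ) = 0 := by
        push_cast
        have h14 : ∀ t : Transaction N, ((if supports X t then (z t : ℚ) else 0))
            = (d : ℚ) * (if supports X t then w t else 0) := by
          intro t
          by_cases h : supports X t <;> simp [h, hzval t, mul_comm]
        rw [Finset.sum_congr rfl fun t _ => h14 t, ← Finset.mul_sum, hw X hX, mul_zero]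
      exact_mod_cast h13
    have h15 := hker z hwz
    have hzr : ∀ t, ((z t : ℝ)) = (w t : ℝ) * d := by
      intro t
      exact_mod_cast congrArg (fun x : ℚ => (x : ℝ)) (hzval t)
    rw [Finset.sum_congr rfl fun t _ => by rw [hzr t]] at h15
    have hsum : (∑ t, (w t : ℝ) * F t) * d = 0 := by
      rw [Finset.sum_mul, ← h15]
      apply Finset.sum_congr rfl
      intro t _
      ring
    have hd0 : (d : ℝ) ≠ 0 := by positivity
    exact (mul_eq_zero.mp hsum).resolve_right hd0
  set J := {X : Finset (Fin N) // X ∈ insert ∅ C} with hJ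
  let A : (Transaction N → ℚ) →ₗ[ℚ] (J → ℚ) :=
    { toFun := fun w j => ∑ t, if supports j.1 t then w t else 0
      map_add' := by
        intro x y
        funext j
        simp only [Pi.add_apply]
        rw [← Finset.sum_add_distrib]
        apply Finset.sum_congr rfl
        intro t _
        by_cases h : supports j.1 t <;> simp [h]
      map_smul' := by
        intro c x
        funext j
        simp only [Pi.smul_apply, smul_eq_mul, RingHom.id_apply]
        rw [Finset.mul_sum]
        apply Finset.sum_congr rfl
        intro t _
        by_cases h : supports j.1 t <;> simp [h] }
  let φ : (Transaction N → ℚ) →ₗ[ℚ] ℝ :=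
    { toFun := fun w => ∑ t, ((w t : ℝ)) * F t
      map_add' := by
        intro x y
        simp only [Pi.add_apply, Rat.cast_add]
        rw [← Finset.sum_add_distrib]
        apply Finset.sum_congr rfl
        intro t _
        ring
      map_smul' := by
        intro c x
        simp only [Pi.smul_apply, smul_eq_mul, Rat.cast_mul, RingHom.id_apply,
          Rat.smul_def, Finset.mul_sum]
        apply Finset.sum_congr rfl
        intro t _
        ring }
  have hkerle : LinearMap.ker A ≤ LinearMap.ker φ := by
    intro w hw
    rw [LinearMap.mem_ker] at hw ⊢
    apply hkerQ
    intro X hX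
    exact congrFun hw ⟨X, hX⟩
  let e := LinearMap.quotKerEquivRange A
  let φq := (LinearMap.ker A).liftQ φ hkerle
  let ψ₀ : LinearMap.range A →ₗ[ℚ] ℝ := φq.comp (e.symm : LinearMap.range A →ₗ[ℚ] _)
  obtain ⟨ψ, hψ⟩ := ψ₀.exists_extend
  have hψA : ∀ w, ψ (A w) = φ w := by
    intro w
    have h1 : (⟨A w, LinearMap.mem_range_self A w⟩ : LinearMap.range A)
        = e (Submodule.Quotient.mk w) := by
      apply Subtype.ext
      simp [e, LinearMap.quotKerEquivRange_apply_mk]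
    have h2 : ψ₀ ⟨A w, LinearMap.mem_range_self A w⟩ = ψ (A w) := by
      have := congrFun (congrArg (fun f => f.toFun) hψ) ⟨A w, LinearMap.mem_range_self A w⟩
      simpa using this.symm
    rw [← h2, h1]
    simp only [ψ₀, LinearMap.comp_apply]
    rw [LinearEquiv.coe_coe, LinearEquiv.symm_apply_apply]
    simp [φq, Submodule.liftQ_apply]
  set lam : Finset (Fin N) → ℝ := fun X =>
    if h : X ∈ insert ∅ C then ψ (Pi.single (⟨X, h⟩ : J) 1) else 0 with hlam
  refine ⟨lam, fun t => ?_⟩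
  have h1 : φ (Pi.single t 1) = F t := by
    simp only [φ, LinearMap.coe_mk, AddHom.coe_mk]
    rw [Finset.sum_eq_single t]
    · simp
    · intro s _ hs
      simp [Pi.single_apply, hs]
    · simp
  have h2 : A (Pi.single t 1) = fun j : J => if supports j.1 t then (1:ℚ) else 0 := by
    funext j
    simp only [A, LinearMap.coe_mk, AddHom.coe_mk]
    rw [Finset.sum_eq_single t]
    · simp
    · intro s _ hs
      simp [Pi.single_apply, hs]
    · simp
  have h3 : (fun j : J => if supports j.1 t then (1:ℚ) else 0)
      = ∑ j : J, Pi.single j (if supports j.1 t then (1:ℚ) else 0) :=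
    (Finset.univ_sum_single _).symm
  have hsingle : ∀ (j : J) (c : ℚ), ψ (Pi.single j c) = c • ψ (Pi.single j 1) := by
    intro j c
    rw [← map_smul]
    congr 1
    funext j'
    by_cases h : j' = j <;> simp [Pi.single_apply, h]
  have h4 : F t = ∑ j : J, (if supports j.1 t then ψ (Pi.single j 1) else 0) := by
    rw [← h1, ← hψA, h2, h3, map_sum]
    apply Finset.sum_congr rfl
    intro j _
    rw [hsingle]
    by_cases h : supports j.1 t <;> simp [h]
  rw [h4]
  rw [← Finset.sum_coe_sort (insert ∅ C) (fun X => if supports X t then lam X else 0)]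
  apply Finset.sum_congr rfl
  intro j _
  by_cases h : supports j.1 t
  · rw [if_pos h, if_pos h, hlam]
    simp only []
    rw [dif_pos j.2]
  · simp [h]

end AffineAux


section KernelAux

open Finset

lemma my_hker_of_hinv {N : ℕ} (C : Finset (Finset (Fin N))) (r : Transaction N → ℝ)
    (hrpos : ∀ t, 0 < r t)
    (hinv : ∀ D1 D2 : Multiset (Transaction N), D1 ≠ 0 → D2 ≠ 0 →
      (∀ X ∈ C, freq X D1 = freq X D2) →
      (1 / (Multiset.card D1 : ℝ)) * Real.logb 2 (lhd r D1) =
        (1 / (Multiset.card D2 : ℝ)) * Real.logb 2 (lhd r D2)) :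
    ∀ w : Transaction N → ℤ,
      (∀ X ∈ insert ∅ C, ∑ t, (if supports X t then w t else 0) = 0) →
      ∑ t, (w t : ℝ) * Real.log (r t) = 0 := by
  classical
  intro w hw
  by_cases hw0 : ∀ t, w t = 0
  · rw [Finset.sum_congr rfl fun t _ => by rw [hw0 t]]
    simp
  push_neg at hw0
  obtain ⟨t0, ht0⟩ := hw0
  set s : ℕ := ∑ t, (w t).natAbs with hsdef
  have hs : 0 < s := by
    rcases Nat.eq_zero_or_pos s with h | h
    · exfalso
      have h' : ∑ t, (w t).natAbs = 0 := by rw [← hsdef]; exact h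
      have h2 : (w t0).natAbs = 0 := (Finset.sum_eq_zero_iff.mp h') t0 (mem_univ t0)
      exact ht0 (Int.natAbs_eq_zero.mp h2)
    · exact h
  have hws : ∀ t, (w t).natAbs ≤ s :=
    fun t => Finset.single_le_sum (f := fun t => (w t).natAbs)
      (fun _ _ => Nat.zero_le _) (mem_univ t)
  have hge : ∀ t, 0 ≤ w t + s := by
    intro t
    have h1 : -((w t).natAbs : ℤ) ≤ w t := by
      rw [← Int.abs_eq_natAbs]
      exact neg_abs_le _
    have h2 : ((w t).natAbs : ℤ) ≤ (s : ℤ) := by exact_mod_cast hws t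
    linarith
  set c1 : Transaction N → ℕ := fun t => (w t + s).toNat with hc1def
  have hc1 : ∀ t, ((c1 t : ℤ)) = w t + s := fun t => Int.toNat_of_nonneg (hge t)
  set D1 : Multiset (Transaction N) := ∑ t, Multiset.replicate (c1 t) t with hD1
  set D2 : Multiset (Transaction N) := ∑ t, Multiset.replicate s t with hD2
  have hcnt : ∀ (c : Transaction N → ℕ) (a : Transaction N),
      Multiset.count a (∑ t, Multiset.replicate (c t) t) = c a := by
    intro c a
    rw [Multiset.count_sum']
    rw [Finset.sum_congr rfl (fun t _ => Multiset.count_replicate a t (c t))]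
    rw [Finset.sum_ite_eq' Finset.univ a c]
    simp
  have hsupp_empty : ∀ t : Transaction N, supports ∅ t := by
    intro t i hi
    exact absurd hi (Finset.notMem_empty i)
  have hw0sum : ∑ t, w t = 0 := by
    have := hw ∅ (Finset.mem_insert_self _ _)
    rwa [Finset.sum_congr rfl fun t _ => if_pos (hsupp_empty t)] at this
  set K : ℕ := Fintype.card (Transaction N) with hK
  have hKpos : 0 < K := Fintype.card_pos_iff.mpr ⟨fun _ => false⟩
  have hcard1 : Multiset.card D1 = ∑ t, c1 t := by
    rw [my_card_eq_sum]
    exact Finset.sum_congr rfl fun t _ => hcnt c1 t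
  have hcard2 : Multiset.card D2 = K * s := by
    rw [my_card_eq_sum]
    rw [Finset.sum_congr rfl fun t _ => hcnt (fun _ => s) t]
    simp [hK, mul_comm]
  have hsumc1 : ∑ t, c1 t = K * s := by
    have hZ : ((∑ t, c1 t : ℕ) : ℤ) = ((K * s : ℕ) : ℤ) := by
      push_cast
      rw [Finset.sum_congr rfl fun t _ => hc1 t, Finset.sum_add_distrib, hw0sum]
      simp [hK, mul_comm]
    exact_mod_cast hZ
  have hcard12 : Multiset.card D1 = Multiset.card D2 := by
    rw [hcard1, hsumc1, hcard2]
  have hne1 : D1 ≠ 0 := by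
    intro h
    have := Multiset.card_eq_zero.mpr h
    rw [hcard1, hsumc1] at this
    exact (Nat.mul_pos hKpos hs).ne' this
  have hne2 : D2 ≠ 0 := by
    intro h
    have := Multiset.card_eq_zero.mpr h
    rw [hcard2] at this
    exact (Nat.mul_pos hKpos hs).ne' this
  have hfreq : ∀ X ∈ C, freq X D1 = freq X D2 := by
    intro X hX
    have hcp1 : D1.countP (fun t => supports X t) = ∑ t, if supports X t then c1 t else 0 := by
      rw [my_countP_eq_sum]
      exact Finset.sum_congr rfl fun t _ => by
        by_cases h : supports X t <;> simp [h, hD1, hcnt]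
    have hcp2 : D2.countP (fun t => supports X t) = ∑ t, if supports X t then s else 0 := by
      rw [my_countP_eq_sum]
      exact Finset.sum_congr rfl fun t _ => by
        by_cases h : supports X t <;> simp [h, hD2, hcnt]
    have hwX := hw X (Finset.mem_insert_of_mem hX)
    have hcpeq : D1.countP (fun t => supports X t) = D2.countP (fun t => supports X t) := by
      have hZ : ((D1.countP (fun t => supports X t) : ℕ) : ℤ)
          = ((D2.countP (fun t => supports X t) : ℕ) : ℤ) := by
        rw [hcp1, hcp2]
        push_cast
        have e1 : ∀ t : Transaction N, (if supports X t then ((c1 t : ℤ)) else 0)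
            = (if supports X t then w t else 0) + (if supports X t then (s : ℤ) else 0) := by
          intro t
          by_cases h : supports X t <;> simp [h, hc1 t]
        rw [Finset.sum_congr rfl fun t _ => e1 t, Finset.sum_add_distrib, hwX, zero_add]
      exact_mod_cast hZ
    unfold freq
    rw [hcpeq, hcard12]
  have happ := hinv D1 D2 hne1 hne2 hfreq
  have hncast : (Multiset.card D1 : ℝ) = (Multiset.card D2 : ℝ) := by
    exact_mod_cast congrArg (fun n : ℕ => (n : ℝ)) hcard12
  have hnpos : (0 : ℝ) < (Multiset.card D1 : ℝ) := by
    have : 0 < Multiset.card D1 := by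
      rw [hcard1, hsumc1]
      exact Nat.mul_pos hKpos hs
    exact_mod_cast this
  have hlogb : Real.logb 2 (lhd r D1) = Real.logb 2 (lhd r D2) := by
    rw [hncast] at happ
    have h1n : (1 : ℝ) / (Multiset.card D2 : ℝ) ≠ 0 := by
      rw [← hncast]
      positivity
    exact mul_left_cancel₀ h1n happ
  have hlog : Real.log (lhd r D1) = Real.log (lhd r D2) := by
    rw [Real.logb, Real.logb] at hlogb
    have hl2 : Real.log 2 ≠ 0 := ne_of_gt (Real.log_pos (by norm_num))
    field_simp at hlogb
    exact hlogb
  have hexpand1 : Real.log (lhd r D1) = ∑ t, ((c1 t : ℝ)) * Real.log (r t) := by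
    unfold lhd
    rw [my_log_lhd (fun t _ => hrpos t)]
    exact Finset.sum_congr rfl fun t _ => by rw [hcnt c1 t]
  have hexpand2 : Real.log (lhd r D2) = ∑ t, ((s : ℝ)) * Real.log (r t) := by
    unfold lhd
    rw [my_log_lhd (fun t _ => hrpos t)]
    exact Finset.sum_congr rfl fun t _ => by rw [hcnt (fun _ => s) t]
  have hwcast : ∀ t, ((w t : ℝ)) = ((c1 t : ℝ)) - (s : ℝ) := by
    intro t
    have h0 := hc1 t
    have h2 : ((c1 t : ℝ)) = (w t : ℝ) + (s : ℝ) := by exact_mod_cast h0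
    linarith
  rw [Finset.sum_congr rfl fun t _ => by rw [hwcast t]]
  have : ∑ t, (((c1 t : ℝ)) - (s : ℝ)) * Real.log (r t)
      = (∑ t, ((c1 t : ℝ)) * Real.log (r t)) - ∑ t, ((s : ℝ)) * Real.log (r t) := by
    rw [← Finset.sum_sub_distrib]
    exact Finset.sum_congr rfl fun t _ => by ring
  rw [this, ← hexpand1, ← hexpand2, hlog, sub_self]

end KernelAux

/-- Theorem 4.5: optimality of the maximum entropy model among models
parametrized by the frequencies of `C`. -/
theorem maxent_optimal_among_frequency_models {N : ℕ} (hN : 1 ≤ N)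
    (C : Finset (Finset (Fin N)))
    (D : Multiset (Transaction N)) (hD : D ≠ 0)
    -- `p*_C` is a maximum-entropy distribution consistent with `D` for `C`:
    (pstar : Transaction N → ℝ) (hpstar : IsDistr pstar)
    (hcons : ∀ X ∈ C, probOne pstar X = freq X D)
    (hmax : ∀ q : Transaction N → ℝ, IsDistr q → (∀ X ∈ C, probOne q X = freq X D) →
      entropy q ≤ entropy pstar)
    -- `r` is an alternative model whose per-transaction log-likelihood depends
    -- only on the frequencies of `C`:
    (r : Transaction N → ℝ) (hr : IsDistr r) (hrpos : ∀ t, 0 < r t)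
    (hinv : ∀ D1 D2 : Multiset (Transaction N), D1 ≠ 0 → D2 ≠ 0 →
      (∀ X ∈ C, freq X D1 = freq X D2) →
      (1 / (Multiset.card D1 : ℝ)) * Real.logb 2 (lhd r D1) =
        (1 / (Multiset.card D2 : ℝ)) * Real.logb 2 (lhd r D2)) :
    lhd r D ≤ lhd pstar D := by
  classical
  obtain ⟨hpb, hpsum⟩ := hpstar
  have hpnn : ∀ t, 0 ≤ pstar t := fun t => (hpb t).1
  obtain ⟨hrb, hrsum⟩ := hr
  set n : ℕ := Multiset.card D with hn
  have hnpos : 0 < n := by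
    rw [hn]
    exact Multiset.card_pos.mpr hD
  have hnR : (0:ℝ) < (n : ℝ) := by exact_mod_cast hnpos
  set q : Transaction N → ℝ := fun t => (D.count t : ℝ) / (n : ℝ) with hq
  have hqnn : ∀ t, 0 ≤ q t := fun t => by
    rw [hq]
    positivity
  have hcards : ∑ t, (D.count t : ℝ) = (n : ℝ) := by
    rw [hn, my_card_eq_sum]
    push_cast
    rfl
  have hqsum : ∑ t, q t = 1 := by
    simp only [hq]
    rw [← Finset.sum_div, hcards]
    field_simp
  have hqle1 : ∀ t, q t ≤ 1 := by
    intro t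
    rw [hq]
    apply div_le_one_of_le₀
    · exact_mod_cast Multiset.count_le_card t D
    · exact hnR.le
  have hqdistr : IsDistr q := ⟨fun t => ⟨hqnn t, hqle1 t⟩, hqsum⟩
  have hqfeas : ∀ X ∈ C, probOne q X = freq X D := by
    intro X hX
    unfold probOne freq
    rw [my_countP_eq_sum]
    push_cast
    rw [Finset.sum_div]
    apply Finset.sum_congr rfl
    intro t _
    by_cases h : supports X t <;> simp [h, hq, hn]
  have hLrel : ∀ u : Transaction N → ℝ, entropy u = - (Lsum u / Real.log 2) := by
    intro u
    unfold entropy Lsum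
    congr 1
    rw [Finset.sum_div]
    apply Finset.sum_congr rfl
    intro t _
    rw [Real.logb, mul_div_assoc]
  have hmax' : ∀ u, IsDistr u → (∀ X ∈ C, probOne u X = freq X D) →
      Lsum pstar ≤ Lsum u := by
    intro u hu hfeas
    have h1 := hmax u hu hfeas
    rw [hLrel, hLrel] at h1
    have hl2 : 0 < Real.log 2 := Real.log_pos (by norm_num)
    have h2 : Lsum pstar / Real.log 2 ≤ Lsum u / Real.log 2 := by linarith
    rw [div_le_div_iff₀ hl2 hl2] at h2
    nlinarith
  have hmixfeas : ∀ ε : ℝ, 0 < ε → ε < 1 →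
      Lsum pstar ≤ Lsum (fun t => (1 - ε) * pstar t + ε * q t) := by
    intro ε h0 h1
    apply hmax'
    · refine ⟨fun t => ⟨?_, ?_⟩, ?_⟩
      · show 0 ≤ (1 - ε) * pstar t + ε * q t
        have e2 : 0 ≤ (1 - ε) * pstar t := mul_nonneg (by linarith) (hpnn t)
        have e3 : 0 ≤ ε * q t := mul_nonneg h0.le (hqnn t)
        linarith
      · show (1 - ε) * pstar t + ε * q t ≤ 1
        have e2 : (1 - ε) * pstar t ≤ (1 - ε) * 1 :=
          mul_le_mul_of_nonneg_left (hpb t).2 (by linarith)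
        have e3 : ε * q t ≤ ε * 1 := mul_le_mul_of_nonneg_left (hqle1 t) h0.le
        linarith
      · rw [Finset.sum_add_distrib, ← Finset.mul_sum, ← Finset.mul_sum, hpsum, hqsum]
        ring
    · intro X hX
      unfold probOne
      have e1 : ∀ t : Transaction N, (if supports X t then (1 - ε) * pstar t + ε * q t else 0)
          = (1 - ε) * (if supports X t then pstar t else 0)
            + ε * (if supports X t then q t else 0) := by
        intro t
        by_cases h : supports X t <;> simp [h]
      rw [Finset.sum_congr rfl fun t _ => e1 t, Finset.sum_add_distrib,
        ← Finset.mul_sum, ← Finset.mul_sum]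
      have h2 : ∑ t, (if supports X t then pstar t else 0) = freq X D := hcons X hX
      have h3 : ∑ t, (if supports X t then q t else 0) = freq X D := hqfeas X hX
      rw [h2, h3]
      ring
  have hLq : Lsum pstar ≤ Lsum q := hmax' q hqdistr hqfeas
  have hsupp : ∀ t, 0 < q t → 0 < pstar t := my_support_subset hpnn hqnn hLq hmixfeas
  have hcross : Lsum pstar ≤ ∑ t, q t * Real.log (pstar t) :=
    my_cross_le hpnn hqnn hpsum hqsum hsupp hmixfeas
  have hgibbs : ∑ t, pstar t * Real.log (r t) ≤ Lsum pstar :=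
    my_gibbs hpnn hpsum hrpos (le_of_eq hrsum)
  have hker := my_hker_of_hinv C r hrpos hinv
  obtain ⟨lam, hlam⟩ := my_exists_affine C (fun t => Real.log (r t)) hker
  have haff : ∀ u : Transaction N → ℝ, ∑ t, u t * Real.log (r t)
      = ∑ X ∈ insert ∅ C, lam X * probOne u X := by
    intro u
    have e1 : ∀ t : Transaction N, u t * Real.log (r t)
        = ∑ X ∈ insert ∅ C, (if supports X t then u t * lam X else 0) := by
      intro t
      rw [hlam t, Finset.mul_sum]
      apply Finset.sum_congr rfl
      intro X _
      by_cases h : supports X t <;> simp [h]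
    rw [Finset.sum_congr rfl fun t _ => e1 t, Finset.sum_comm]
    apply Finset.sum_congr rfl
    intro X _
    unfold probOne
    rw [Finset.mul_sum]
    apply Finset.sum_congr rfl
    intro t _
    by_cases h : supports X t <;> simp [h, mul_comm]
  have hempty : ∀ t : Transaction N, supports ∅ t := by
    intro t i hi
    exact absurd hi (Finset.notMem_empty i)
  have hprobeq : ∀ X ∈ insert ∅ C, probOne q X = probOne pstar X := by
    intro X hX
    rcases Finset.mem_insert.mp hX with h | h
    · subst h
      unfold probOne
      rw [Finset.sum_congr rfl fun t _ => if_pos (hempty t),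
        Finset.sum_congr rfl fun t _ => if_pos (hempty t), hqsum, hpsum]
    · rw [hqfeas X h, hcons X h]
  have hswap : ∑ t, q t * Real.log (r t) = ∑ t, pstar t * Real.log (r t) := by
    rw [haff q, haff pstar]
    exact Finset.sum_congr rfl fun X hX => by rw [hprobeq X hX]
  have hchain : ∑ t, q t * Real.log (r t) ≤ ∑ t, q t * Real.log (pstar t) := by
    rw [hswap]
    exact le_trans hgibbs hcross
  have hsuppD : ∀ t : Transaction N, D.count t ≠ 0 → 0 < pstar t := by
    intro t hc
    apply hsupp
    rw [hq]
    have hcpos : (0:ℝ) < (D.count t : ℝ) := by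
      exact_mod_cast Nat.pos_of_ne_zero hc
    positivity
  have hlogr : Real.log (lhd r D) = ∑ t, (D.count t : ℝ) * Real.log (r t) := by
    unfold lhd
    exact my_log_lhd (fun t _ => hrpos t)
  have hlogp : Real.log (lhd pstar D) = ∑ t, (D.count t : ℝ) * Real.log (pstar t) := by
    unfold lhd
    exact my_log_lhd hsuppD
  have hsc : ∀ g : Transaction N → ℝ, ∑ t, (D.count t : ℝ) * g t = (n:ℝ) * ∑ t, q t * g t := by
    intro g
    rw [Finset.mul_sum]
    apply Finset.sum_congr rfl
    intro t _
    rw [hq]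
    field_simp
  have hloglog : Real.log (lhd r D) ≤ Real.log (lhd pstar D) := by
    rw [hlogr, hlogp, hsc, hsc]
    exact mul_le_mul_of_nonneg_left hchain hnR.le
  have hlr : 0 < lhd r D := by
    unfold lhd
    rw [my_lhd_eq_prod]
    exact Finset.prod_pos fun t _ => pow_pos (hrpos t) _
  have hlp : 0 < lhd pstar D := by
    unfold lhd
    rw [my_lhd_eq_prod]
    apply Finset.prod_pos
    intro t _
    rcases eq_or_ne (D.count t) 0 with h | h
    · simp [h]
    · exact pow_pos (hsuppD t h) _
  exact (Real.log_le_log_iff hlr hlp).mp hloglog
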